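/- Every λG-term t : A reduces in finitely many steps to a term in parallel form, using only the permutation reductions. -/

import Mathlib

/-- Formulas (= types) built from atoms, ⊥, ∧ and →. -/
inductive Form where
  | atom : ℕ → Form
  | bot  : Form
  | conj : Form → Form → Form
  | imp  : Form → Form → Form
deriving DecidableEq

/-- Terms of the λG-calculus: simply typed λ-terms extended with the parallel
operator u ∥ₐ v (the channel a is annotated with its communication kind B, C). -/
inductive Tm where
  | var : ℕ → Tm
  | lam : ℕ → Form → Tm → Tm
  | app : Tm → Tm → Tm
  | pair : Tm → Tm → Tm
  | proj : Bool → Tm → Tm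
  | efq : ℕ → Tm → Tm
  | par : ℕ → Form → Form → Tm → Tm → Tm
deriving DecidableEq

/-- Free variables of a λG-term; in u ∥ₐ v the channel a is bound. -/
def FV : Tm → Set ℕ
  | .var x => {x}
  | .lam x _ u => FV u \ {x}
  | .app u w => FV u ∪ FV w
  | .pair u v => FV u ∪ FV v
  | .proj _ u => FV u
  | .efq _ u => FV u
  | .par a _ _ u v => (FV u ∪ FV v) \ {a}

/-- A term is a simply typed λ-term iff it contains no parallel operator. -/
def NoPar : Tm → Prop
  | .var _ => True
  | .lam _ _ u => NoPar u
  | .app u w => NoPar u ∧ NoPar w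
  | .pair u v => NoPar u ∧ NoPar v
  | .proj _ u => NoPar u
  | .efq _ u => NoPar u
  | .par _ _ _ _ _ => False

def IsLam : Tm → Prop
  | .lam _ _ _ => True
  | _ => False

def IsPair : Tm → Prop
  | .pair _ _ => True
  | _ => False

def IsPar : Tm → Prop
  | .par _ _ _ _ _ => True
  | _ => False
def upd (Γ : ℕ → Option Form) (x : ℕ) (A : Form) : ℕ → Option Form :=
  fun y => if y = x then some A else Γ y

/-- Typing for λG: simply typed λ-calculus rules plus the (com) rule, which
types u ∥ₐ v : A from u : A under a : B→C and v : A under a : C→B. -/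
inductive Typed : (ℕ → Option Form) → Tm → Form → Prop
  | var : Γ x = some A → Typed Γ (.var x) A
  | lam : Typed (upd Γ x A) u B → Typed Γ (.lam x A u) (.imp A B)
  | app : Typed Γ u (.imp A B) → Typed Γ w A → Typed Γ (.app u w) B
  | pair : Typed Γ u A → Typed Γ v B → Typed Γ (.pair u v) (.conj A B)
  | projL : Typed Γ u (.conj A B) → Typed Γ (.proj false u) A
  | projR : Typed Γ u (.conj A B) → Typed Γ (.proj true u) B
  | efq : Typed Γ u .bot → Typed Γ (.efq n u) (.atom n)
  | par : Typed (upd Γ a (.imp B C)) u A → Typed (upd Γ a (.imp C B)) v A →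
      Typed Γ (.par a B C u v) A

/-- All variables occurring in a term (free, bound, or as binders). -/
def Vars : Tm → Set ℕ
  | .var x => {x}
  | .lam x _ u => {x} ∪ Vars u
  | .app u w => Vars u ∪ Vars w
  | .pair u v => Vars u ∪ Vars v
  | .proj _ u => Vars u
  | .efq _ u => Vars u
  | .par a _ _ u v => {a} ∪ Vars u ∪ Vars v

/-- Replace the free variable a by c (c assumed totally fresh). -/
def ren (a c : ℕ) : Tm → Tm
  | .var x => if x = a then .var c else .var x
  | .lam x A u => if x = a then .lam x A u else .lam x A (ren a c u)
  | .app u w => .app (ren a c u) (ren a c w)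
  | .pair u v => .pair (ren a c u) (ren a c v)
  | .proj b u => .proj b (ren a c u)
  | .efq n u => .efq n (ren a c u)
  | .par b B C u v =>
      if b = a then .par b B C u v else .par b B C (ren a c u) (ren a c v)

/-- The permutation reductions of λG (together with the standard renaming of
bound channels used to satisfy their freshness side conditions), closed under
arbitrary contexts. -/
inductive Step : Tm → Tm → Prop
  | appL_par : a ∉ FV w → Step (.app (.par a B C u v) w) (.par a B C (.app u w) (.app v w))
  | appR_par : a ∉ FV w → Step (.app w (.par a B C u v)) (.par a B C (.app w u) (.app w v))
  | proj_par : Step (.proj b (.par a B C u v)) (.par a B C (.proj b u) (.proj b v))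
  | lam_par : x ≠ a → Step (.lam x A (.par a B C u v)) (.par a B C (.lam x A u) (.lam x A v))
  | pairL_par : a ∉ FV w → Step (.pair (.par a B C u v) w) (.par a B C (.pair u w) (.pair v w))
  | pairR_par : a ∉ FV w → Step (.pair w (.par a B C u v)) (.par a B C (.pair w u) (.pair w v))
  | efq_par : Step (.efq n (.par a B C u v)) (.par a B C (.efq n u) (.efq n v))
  | alpha : c ∉ Vars u → c ∉ Vars v →
      Step (.par a B C u v) (.par c B C (ren a c u) (ren a c v))
  | lam_cong : Step u u' → Step (.lam x A u) (.lam x A u')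
  | appL_cong : Step u u' → Step (.app u w) (.app u' w)
  | appR_cong : Step w w' → Step (.app u w) (.app u w')
  | pairL_cong : Step u u' → Step (.pair u v) (.pair u' v)
  | pairR_cong : Step v v' → Step (.pair u v) (.pair u v')
  | proj_cong : Step u u' → Step (.proj b u) (.proj b u')
  | efq_cong : Step u u' → Step (.efq n u) (.efq n u')
  | parL_cong : Step u u' → Step (.par a B C u v) (.par a B C u' v)
  | parR_cong : Step v v' → Step (.par a B C u v) (.par a B C u v')

/-- Parallel form: a tree of parallel operators over simply typed λ-terms. -/
inductive ParallelForm : Tm → Prop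
  | base : NoPar t → ParallelForm t
  | par : ParallelForm u → ParallelForm v → ParallelForm (.par a B C u v)

open Relation

/-! Auxiliary machinery -/

def size : Tm → ℕ
  | .var _ => 1
  | .lam _ _ u => size u + 1
  | .app u w => size u + size w + 1
  | .pair u v => size u + size v + 1
  | .proj _ u => size u + 1
  | .efq _ u => size u + 1
  | .par _ _ _ u v => size u + size v + 1

lemma size_pos (t : Tm) : 1 ≤ size t := by cases t <;> simp [size]

def vars : Tm → Finset ℕ
  | .var x => {x}
  | .lam x _ u => {x} ∪ vars u
  | .app u w => vars u ∪ vars w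
  | .pair u v => vars u ∪ vars v
  | .proj _ u => vars u
  | .efq _ u => vars u
  | .par a _ _ u v => {a} ∪ vars u ∪ vars v

lemma mem_vars {x : ℕ} : ∀ {t : Tm}, x ∈ Vars t ↔ x ∈ vars t := by
  intro t
  induction t <;> simp [Vars, vars, *] <;> tauto

lemma fv_sub_vars {x : ℕ} : ∀ {t : Tm}, x ∈ FV t → x ∈ Vars t := by
  intro t
  induction t with
  | var y => simp [FV, Vars]
  | lam y A u ih => intro h; exact Or.inr (ih h.1)
  | app u w ih1 ih2 => rintro (h | h); exacts [Or.inl (ih1 h), Or.inr (ih2 h)]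
  | pair u w ih1 ih2 => rintro (h | h); exacts [Or.inl (ih1 h), Or.inr (ih2 h)]
  | proj b u ih => exact ih
  | efq n u ih => exact ih
  | par a B C u v ih1 ih2 =>
      rintro ⟨h | h, -⟩
      exacts [Or.inl (Or.inr (ih1 h)), Or.inr (ih2 h)]

def fresh (s : Finset ℕ) : ℕ := s.sup id + 1

lemma fresh_not_mem (s : Finset ℕ) : fresh s ∉ s := by
  intro h
  have : id (fresh s) ≤ s.sup id := Finset.le_sup h
  simp only [id_eq, fresh] at this
  omega

lemma ren_size (a c : ℕ) : ∀ t, size (ren a c t) = size t := by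
  intro t
  induction t <;> simp [ren, size, *] <;> split <;> simp [size, *]

lemma ren_noPar (a c : ℕ) : ∀ {t}, NoPar t → NoPar (ren a c t) := by
  intro t
  induction t with
  | var x => intro _; simp only [ren]; split <;> trivial
  | lam x A u ih => intro h; simp only [ren]; split; exact h; exact ih h
  | app u w ih1 ih2 => exact fun h => ⟨ih1 h.1, ih2 h.2⟩
  | pair u w ih1 ih2 => exact fun h => ⟨ih1 h.1, ih2 h.2⟩
  | proj b u ih => exact ih
  | efq n u ih => exact ih
  | par a B C u v _ _ => exact fun h => h.elim

lemma ren_pf (a c : ℕ) {t : Tm} (h : ParallelForm t) : ParallelForm (ren a c t) := by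
  induction h with
  | base h => exact .base (ren_noPar a c h)
  | @par u v b B C h1 h2 ih1 ih2 =>
      simp only [ren]
      split
      · exact .par h1 h2
      · exact .par ih1 ih2

/-! Lifted reductions -/

lemma rtg_appL {u u' w : Tm} (h : ReflTransGen Step u u') :
    ReflTransGen Step (.app u w) (.app u' w) :=
  ReflTransGen.lift (fun t => Tm.app t w) (fun _ _ => Step.appL_cong) _ _ h

lemma rtg_appR {u w w' : Tm} (h : ReflTransGen Step w w') :
    ReflTransGen Step (.app u w) (.app u w') :=
  ReflTransGen.lift (fun t => Tm.app u t) (fun _ _ => Step.appR_cong) _ _ h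

lemma rtg_pairL {u u' w : Tm} (h : ReflTransGen Step u u') :
    ReflTransGen Step (.pair u w) (.pair u' w) :=
  ReflTransGen.lift (fun t => Tm.pair t w) (fun _ _ => Step.pairL_cong) _ _ h

lemma rtg_pairR {u w w' : Tm} (h : ReflTransGen Step w w') :
    ReflTransGen Step (.pair u w) (.pair u w') :=
  ReflTransGen.lift (fun t => Tm.pair u t) (fun _ _ => Step.pairR_cong) _ _ h

lemma rtg_lam {x A} {u u' : Tm} (h : ReflTransGen Step u u') :
    ReflTransGen Step (.lam x A u) (.lam x A u') :=
  ReflTransGen.lift (fun t => Tm.lam x A t) (fun _ _ => Step.lam_cong) _ _ h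

lemma rtg_proj {b} {u u' : Tm} (h : ReflTransGen Step u u') :
    ReflTransGen Step (.proj b u) (.proj b u') :=
  ReflTransGen.lift (fun t => Tm.proj b t) (fun _ _ => Step.proj_cong) _ _ h

lemma rtg_efq {n} {u u' : Tm} (h : ReflTransGen Step u u') :
    ReflTransGen Step (.efq n u) (.efq n u') :=
  ReflTransGen.lift (fun t => Tm.efq n t) (fun _ _ => Step.efq_cong) _ _ h

lemma rtg_parL {a B C} {u u' v : Tm} (h : ReflTransGen Step u u') :
    ReflTransGen Step (.par a B C u v) (.par a B C u' v) :=
  ReflTransGen.lift (fun t => Tm.par a B C t v) (fun _ _ => Step.parL_cong) _ _ h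

lemma rtg_parR {a B C} {u v v' : Tm} (h : ReflTransGen Step v v') :
    ReflTransGen Step (.par a B C u v) (.par a B C u v') :=
  ReflTransGen.lift (fun t => Tm.par a B C u t) (fun _ _ => Step.parR_cong) _ _ h

/-! Push lemmas -/

lemma push_app : ∀ n u w, size u + size w ≤ n → ParallelForm u → ParallelForm w →
    ∃ t', ReflTransGen Step (.app u w) t' ∧ ParallelForm t' := by
  intro n
  induction n with
  | zero => intro u w h; have := size_pos u; have := size_pos w; omega
  | succ n ih =>
    intro u w h hu hw
    cases hu with
    | @par u1 u2 a B C h1 h2 =>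
        set c := fresh (vars u1 ∪ vars u2 ∪ vars w) with hc
        have hcs : c ∉ vars u1 ∪ vars u2 ∪ vars w := fresh_not_mem _
        have hc1 : c ∉ Vars u1 := fun hm =>
          hcs (Finset.mem_union_left _ (Finset.mem_union_left _ (mem_vars.mp hm)))
        have hc2 : c ∉ Vars u2 := fun hm =>
          hcs (Finset.mem_union_left _ (Finset.mem_union_right _ (mem_vars.mp hm)))
        have hcw : c ∉ FV w := fun hm =>
          hcs (Finset.mem_union_right _ (mem_vars.mp (fv_sub_vars hm)))
        simp only [size] at h
        obtain ⟨t1, r1, p1⟩ := ih (ren a c u1) w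
          (by rw [ren_size]; have := size_pos u2; omega) (ren_pf a c h1) hw
        obtain ⟨t2, r2, p2⟩ := ih (ren a c u2) w
          (by rw [ren_size]; have := size_pos u1; omega) (ren_pf a c h2) hw
        refine ⟨.par c B C t1 t2, ?_, .par p1 p2⟩
        exact .head (Step.appL_cong (Step.alpha hc1 hc2))
          (.head (Step.appL_par hcw) ((rtg_parL r1).trans (rtg_parR r2)))
    | base hu' =>
      cases hw with
      | base hw' => exact ⟨_, .refl, .base ⟨hu', hw'⟩⟩
      | @par w1 w2 a B C h1 h2 =>
          set c := fresh (vars w1 ∪ vars w2 ∪ vars u) with hc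
          have hcs : c ∉ vars w1 ∪ vars w2 ∪ vars u := fresh_not_mem _
          have hc1 : c ∉ Vars w1 := fun hm =>
            hcs (Finset.mem_union_left _ (Finset.mem_union_left _ (mem_vars.mp hm)))
          have hc2 : c ∉ Vars w2 := fun hm =>
            hcs (Finset.mem_union_left _ (Finset.mem_union_right _ (mem_vars.mp hm)))
          have hcu : c ∉ FV u := fun hm =>
            hcs (Finset.mem_union_right _ (mem_vars.mp (fv_sub_vars hm)))
          simp only [size] at h
          obtain ⟨t1, r1, p1⟩ := ih u (ren a c w1)
            (by rw [ren_size]; have := size_pos w2; omega) (.base hu') (ren_pf a c h1)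
          obtain ⟨t2, r2, p2⟩ := ih u (ren a c w2)
            (by rw [ren_size]; have := size_pos w1; omega) (.base hu') (ren_pf a c h2)
          refine ⟨.par c B C t1 t2, ?_, .par p1 p2⟩
          exact .head (Step.appR_cong (Step.alpha hc1 hc2))
            (.head (Step.appR_par hcu) ((rtg_parL r1).trans (rtg_parR r2)))

lemma push_pair : ∀ n u w, size u + size w ≤ n → ParallelForm u → ParallelForm w →
    ∃ t', ReflTransGen Step (.pair u w) t' ∧ ParallelForm t' := by
  intro n
  induction n with
  | zero => intro u w h; have := size_pos u; have := size_pos w; omega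
  | succ n ih =>
    intro u w h hu hw
    cases hu with
    | @par u1 u2 a B C h1 h2 =>
        set c := fresh (vars u1 ∪ vars u2 ∪ vars w) with hc
        have hcs : c ∉ vars u1 ∪ vars u2 ∪ vars w := fresh_not_mem _
        have hc1 : c ∉ Vars u1 := fun hm =>
          hcs (Finset.mem_union_left _ (Finset.mem_union_left _ (mem_vars.mp hm)))
        have hc2 : c ∉ Vars u2 := fun hm =>
          hcs (Finset.mem_union_left _ (Finset.mem_union_right _ (mem_vars.mp hm)))
        have hcw : c ∉ FV w := fun hm =>
          hcs (Finset.mem_union_right _ (mem_vars.mp (fv_sub_vars hm)))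
        simp only [size] at h
        obtain ⟨t1, r1, p1⟩ := ih (ren a c u1) w
          (by rw [ren_size]; have := size_pos u2; omega) (ren_pf a c h1) hw
        obtain ⟨t2, r2, p2⟩ := ih (ren a c u2) w
          (by rw [ren_size]; have := size_pos u1; omega) (ren_pf a c h2) hw
        refine ⟨.par c B C t1 t2, ?_, .par p1 p2⟩
        exact .head (Step.pairL_cong (Step.alpha hc1 hc2))
          (.head (Step.pairL_par hcw) ((rtg_parL r1).trans (rtg_parR r2)))
    | base hu' =>
      cases hw with
      | base hw' => exact ⟨_, .refl, .base ⟨hu', hw'⟩⟩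
      | @par w1 w2 a B C h1 h2 =>
          set c := fresh (vars w1 ∪ vars w2 ∪ vars u) with hc
          have hcs : c ∉ vars w1 ∪ vars w2 ∪ vars u := fresh_not_mem _
          have hc1 : c ∉ Vars w1 := fun hm =>
            hcs (Finset.mem_union_left _ (Finset.mem_union_left _ (mem_vars.mp hm)))
          have hc2 : c ∉ Vars w2 := fun hm =>
            hcs (Finset.mem_union_left _ (Finset.mem_union_right _ (mem_vars.mp hm)))
          have hcu : c ∉ FV u := fun hm =>
            hcs (Finset.mem_union_right _ (mem_vars.mp (fv_sub_vars hm)))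
          simp only [size] at h
          obtain ⟨t1, r1, p1⟩ := ih u (ren a c w1)
            (by rw [ren_size]; have := size_pos w2; omega) (.base hu') (ren_pf a c h1)
          obtain ⟨t2, r2, p2⟩ := ih u (ren a c w2)
            (by rw [ren_size]; have := size_pos w1; omega) (.base hu') (ren_pf a c h2)
          refine ⟨.par c B C t1 t2, ?_, .par p1 p2⟩
          exact .head (Step.pairR_cong (Step.alpha hc1 hc2))
            (.head (Step.pairR_par hcu) ((rtg_parL r1).trans (rtg_parR r2)))

lemma push_lam (x : ℕ) (A : Form) : ∀ n u, size u ≤ n → ParallelForm u →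
    ∃ t', ReflTransGen Step (.lam x A u) t' ∧ ParallelForm t' := by
  intro n
  induction n with
  | zero => intro u h; have := size_pos u; omega
  | succ n ih =>
    intro u h hu
    cases hu with
    | base hu' => exact ⟨_, .refl, .base hu'⟩
    | @par u1 u2 a B C h1 h2 =>
        set c := fresh ({x} ∪ vars u1 ∪ vars u2) with hc
        have hcs : c ∉ {x} ∪ vars u1 ∪ vars u2 := fresh_not_mem _
        have hc1 : c ∉ Vars u1 := fun hm =>
          hcs (Finset.mem_union_left _ (Finset.mem_union_right _ (mem_vars.mp hm)))
        have hc2 : c ∉ Vars u2 := fun hm =>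
          hcs (Finset.mem_union_right _ (mem_vars.mp hm))
        have hcx : x ≠ c := fun hm =>
          hcs (Finset.mem_union_left _ (Finset.mem_union_left _
            (Finset.mem_singleton.mpr hm.symm)))
        simp only [size] at h
        obtain ⟨t1, r1, p1⟩ := ih (ren a c u1)
          (by rw [ren_size]; have := size_pos u2; omega) (ren_pf a c h1)
        obtain ⟨t2, r2, p2⟩ := ih (ren a c u2)
          (by rw [ren_size]; have := size_pos u1; omega) (ren_pf a c h2)
        refine ⟨.par c B C t1 t2, ?_, .par p1 p2⟩
        exact .head (Step.lam_cong (Step.alpha hc1 hc2))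
          (.head (Step.lam_par hcx) ((rtg_parL r1).trans (rtg_parR r2)))

lemma push_proj (b : Bool) {u : Tm} (hu : ParallelForm u) :
    ∃ t', ReflTransGen Step (.proj b u) t' ∧ ParallelForm t' := by
  induction hu with
  | base h => exact ⟨_, .refl, .base h⟩
  | @par u v a B C h1 h2 ih1 ih2 =>
      obtain ⟨t1, r1, p1⟩ := ih1
      obtain ⟨t2, r2, p2⟩ := ih2
      exact ⟨.par a B C t1 t2,
        .head Step.proj_par ((rtg_parL r1).trans (rtg_parR r2)), .par p1 p2⟩

lemma push_efq (n : ℕ) {u : Tm} (hu : ParallelForm u) :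
    ∃ t', ReflTransGen Step (.efq n u) t' ∧ ParallelForm t' := by
  induction hu with
  | base h => exact ⟨_, .refl, .base h⟩
  | @par u v a B C h1 h2 ih1 ih2 =>
      obtain ⟨t1, r1, p1⟩ := ih1
      obtain ⟨t2, r2, p2⟩ := ih2
      exact ⟨.par a B C t1 t2,
        .head Step.efq_par ((rtg_parL r1).trans (rtg_parR r2)), .par p1 p2⟩

/-- Every typed λG-term reduces in finitely many steps to a parallel form,
using only the permutation reductions. -/
theorem reduces_to_parallel_form (Γ : ℕ → Option Form) (t : Tm) (A : Form)
    (ht : Typed Γ t A) :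
    ∃ t', Relation.ReflTransGen Step t t' ∧ ParallelForm t' := by
  clear ht
  induction t with
  | var x => exact ⟨_, .refl, .base trivial⟩
  | lam x A u ih =>
      obtain ⟨u', ru, pu⟩ := ih
      obtain ⟨t', rt, pt⟩ := push_lam x A (size u') u' le_rfl pu
      exact ⟨t', (rtg_lam ru).trans rt, pt⟩
  | app u w ih1 ih2 =>
      obtain ⟨u', ru, pu⟩ := ih1
      obtain ⟨w', rw', pw⟩ := ih2
      obtain ⟨t', rt, pt⟩ := push_app (size u' + size w') u' w' le_rfl pu pw
      exact ⟨t', ((rtg_appL ru).trans (rtg_appR rw')).trans rt, pt⟩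
  | pair u w ih1 ih2 =>
      obtain ⟨u', ru, pu⟩ := ih1
      obtain ⟨w', rw', pw⟩ := ih2
      obtain ⟨t', rt, pt⟩ := push_pair (size u' + size w') u' w' le_rfl pu pw
      exact ⟨t', ((rtg_pairL ru).trans (rtg_pairR rw')).trans rt, pt⟩
  | proj b u ih =>
      obtain ⟨u', ru, pu⟩ := ih
      obtain ⟨t', rt, pt⟩ := push_proj b pu
      exact ⟨t', (rtg_proj ru).trans rt, pt⟩
  | efq n u ih =>
      obtain ⟨u', ru, pu⟩ := ih
      obtain ⟨t', rt, pt⟩ := push_efq n pu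
      exact ⟨t', (rtg_efq ru).trans rt, pt⟩
  | par a B C u v ih1 ih2 =>
      obtain ⟨u', ru, pu⟩ := ih1
      obtain ⟨v', rv, pv⟩ := ih2
      exact ⟨.par a B C u' v', (rtg_parL ru).trans (rtg_parR rv), .par pu pv⟩
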